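/- For every compatible CDF F: Rev_F(Q*) ≥ 2L − L²/B. That is, the generalized equal-revenue distribution F* (which achieves the value 2L − L²/B) minimizes the seller's expected revenue against the reserve-price distribution Q* among all distributions with mean μ and support contained in [0, B]. -/

import Mathlib

open MeasureTheory Filter Set

noncomputable def cQ (B L : ℝ) : ℝ := (B - L) / (B * (Real.log B - Real.log L))
noncomputable def qd (B L : ℝ) (t : ℝ) : ℝ :=
  cQ B L * ((t - L) - L * (Real.log t - Real.log L)) / (t - L)^2
noncomputable def psi (B L : ℝ) : ℝ → ℝ :=
  Function.update (fun t => cQ B L * t * (Real.log t - Real.log L) / (t - L)) L (cQ B L)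
noncomputable def phiJ (B L : ℝ) : ℝ → ℝ :=
  Function.update (fun t => -(cQ B L) * (Real.log t - Real.log L) / (t - L)) L (-(cQ B L) / L)

section aux

lemma logBL_pos {B L : ℝ} (hL0 : 0 < L) (hLB : L < B) : 0 < Real.log B - Real.log L :=
  sub_pos.2 (Real.log_lt_log hL0 hLB)

lemma cQ_pos {B L : ℝ} (hL0 : 0 < L) (hLB : L < B) : 0 < cQ B L :=
  div_pos (by linarith) (mul_pos (hL0.trans hLB) (logBL_pos hL0 hLB))

lemma psi_eq (B : ℝ) {L t : ℝ} (ht : t ≠ L) :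
    psi B L t = cQ B L * t * (Real.log t - Real.log L) / (t - L) :=
  Function.update_of_ne ht _ _

lemma phiJ_eq (B : ℝ) {L t : ℝ} (ht : t ≠ L) :
    phiJ B L t = -(cQ B L) * (Real.log t - Real.log L) / (t - L) :=
  Function.update_of_ne ht _ _

lemma slope_log_tendsto {L : ℝ} (hL0 : 0 < L) :
    Tendsto (fun t : ℝ => (Real.log t - Real.log L)/(t - L))
    (nhdsWithin L {L}ᶜ) (nhds L⁻¹) := by
  have h := hasDerivAt_iff_tendsto_slope.1 (Real.hasDerivAt_log hL0.ne')
  refine h.congr fun t => ?_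
  rw [slope_def_field]

lemma log_diff_le {L t : ℝ} (hL0 : 0 < L) (ht : L < t) :
    Real.log t - Real.log L ≤ (t - L)/L := by
  have h1 : (0:ℝ) < t := hL0.trans ht
  have h2 := Real.log_le_sub_one_of_pos (x := t/L) (div_pos h1 hL0)
  rw [Real.log_div h1.ne' hL0.ne'] at h2
  have h3 : t / L - 1 = (t - L) / L := by field_simp
  linarith

lemma le_log_diff {L t : ℝ} (hL0 : 0 < L) (ht : L < t) :
    (t - L)/t ≤ Real.log t - Real.log L := by
  have h1 : (0:ℝ) < t := hL0.trans ht
  have h2 := Real.log_le_sub_one_of_pos (x := L/t) (div_pos hL0 h1)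
  rw [Real.log_div hL0.ne' h1.ne'] at h2
  have h3 : L/t - 1 = -((t - L)/t) := by field_simp; ring
  linarith

lemma qd_nonneg {B L t : ℝ} (hL0 : 0 < L) (hLB : L < B) (ht : L < t) : 0 ≤ qd B L t := by
  have h1 : (0:ℝ) < t := hL0.trans ht
  have h2 := log_diff_le hL0 ht
  have h3 : L * (Real.log t - Real.log L) ≤ t - L := by
    have := mul_le_mul_of_nonneg_left h2 hL0.le
    rw [mul_div_cancel₀ _ hL0.ne'] at this; linarith
  exact div_nonneg (mul_nonneg (cQ_pos hL0 hLB).le (by linarith)) (by positivity)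

lemma qd_le {B L t : ℝ} (hL0 : 0 < L) (hLB : L < B) (ht : L < t) : qd B L t ≤ cQ B L / L := by
  have h1 : (0:ℝ) < t := hL0.trans ht
  have h2 := le_log_diff hL0 ht
  have hc := (cQ_pos hL0 hLB).le
  -- (t-L) - L*(log t - log L) ≤ (t-L) - L*(t-L)/t = (t-L)^2/t
  have h3 : (t - L) - L * (Real.log t - Real.log L) ≤ (t - L)^2 / t := by
    have h4 : L * ((t-L)/t) ≤ L * (Real.log t - Real.log L) :=
      mul_le_mul_of_nonneg_left h2 hL0.le
    have h5 : (t - L) - L * ((t-L)/t) = (t-L)^2/t + (t-L)*(t-L)*0 := by field_simp; ring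
    nlinarith
  have h6 : qd B L t ≤ cQ B L * ((t-L)^2/t) / (t-L)^2 := by
    unfold qd
    apply div_le_div_of_nonneg_right ?_ (by positivity) |>.trans_eq rfl
    exact mul_le_mul_of_nonneg_left h3 hc
  have h7 : cQ B L * ((t-L)^2/t) / (t-L)^2 = cQ B L / t := by
    have hne : (t - L)^2 ≠ 0 := pow_ne_zero _ (sub_ne_zero.2 ht.ne')
    rw [div_eq_div_iff hne h1.ne']
    field_simp
  rw [h7] at h6
  exact h6.trans (div_le_div_of_nonneg_left hc hL0 ht.le |>.trans_eq rfl)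

end aux

section aux2
variable {B L : ℝ}

lemma psi_at_L : psi B L L = cQ B L := Function.update_self _ _ _
lemma phiJ_at_L : phiJ B L L = -(cQ B L)/L := Function.update_self _ _ _

lemma psi_hasDerivAt (hL0 : 0 < L) {t : ℝ} (ht : L < t) :
    HasDerivAt (psi B L) (qd B L t) t := by
  have h0 : (0:ℝ) < t := hL0.trans ht
  have h1 : HasDerivAt (fun s : ℝ => Real.log s - Real.log L) t⁻¹ t :=
    (Real.hasDerivAt_log h0.ne').sub_const _
  have h2 : HasDerivAt (fun s : ℝ => cQ B L * s) (cQ B L) t := by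
    simpa using (hasDerivAt_id t).const_mul (cQ B L)
  have h4 : HasDerivAt (fun s : ℝ => s - L) 1 t := (hasDerivAt_id t).sub_const _
  have h5 := (h2.mul h1).div h4 (sub_ne_zero.2 ht.ne')
  have h6 : HasDerivAt (fun s : ℝ => cQ B L * s * (Real.log s - Real.log L) / (s - L))
      (qd B L t) t := by
    refine h5.congr_deriv ?_
    simp only [Pi.mul_apply]
    unfold qd
    have hne : t - L ≠ 0 := sub_ne_zero.2 ht.ne'
    field_simp
    ring
  refine h6.congr_of_eventuallyEq ?_
  filter_upwards [eventually_ne_nhds ht.ne'] with s hs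
  exact psi_eq B hs

lemma phiJ_hasDerivAt (hL0 : 0 < L) {t : ℝ} (ht : L < t) :
    HasDerivAt (phiJ B L) ((psi B L t - t * qd B L t)/t^2) t := by
  have h0 : (0:ℝ) < t := hL0.trans ht
  have h1 : HasDerivAt (fun s : ℝ => Real.log s - Real.log L) t⁻¹ t :=
    (Real.hasDerivAt_log h0.ne').sub_const _
  have h4 : HasDerivAt (fun s : ℝ => s - L) 1 t := (hasDerivAt_id t).sub_const _
  have h5 := ((h1.const_mul (-(cQ B L))).div h4 (sub_ne_zero.2 ht.ne'))
  have h6 : HasDerivAt (fun s : ℝ => -(cQ B L) * (Real.log s - Real.log L) / (s - L))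
      ((psi B L t - t * qd B L t)/t^2) t := by
    refine h5.congr_deriv ?_
    rw [psi_eq B ht.ne']
    unfold qd
    have hne : t - L ≠ 0 := sub_ne_zero.2 ht.ne'
    field_simp
    ring
  refine h6.congr_of_eventuallyEq ?_
  filter_upwards [eventually_ne_nhds ht.ne'] with s hs
  exact phiJ_eq B hs

lemma psi_contOn (hL0 : 0 < L) : ContinuousOn (psi B L) (Set.Ici L) := by
  intro x hx
  rcases eq_or_lt_of_le (Set.mem_Ici.1 hx) with rfl | hx'
  · rw [psi, continuousWithinAt_update_same]
    have hs := (slope_log_tendsto hL0).mono_left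
      (nhdsWithin_mono L (fun y (hy : y ∈ Set.Ici L \ {L}) => hy.2))
    have hc : Filter.Tendsto (fun s : ℝ => cQ B L * s)
        (nhdsWithin L (Set.Ici L \ {L})) (nhds (cQ B L * L)) :=
      ((continuous_const.mul continuous_id).tendsto L).mono_left nhdsWithin_le_nhds
    have h := hc.mul hs
    have hval : cQ B L * L * L⁻¹ = cQ B L := by field_simp
    rw [hval] at h
    refine h.congr fun s => ?_
    ring
  · have hev : (fun s : ℝ => cQ B L * s * (Real.log s - Real.log L) / (s - L)) =ᶠ[nhds x]
        psi B L := by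
      filter_upwards [eventually_ne_nhds hx'.ne'] with s hs
      exact (psi_eq B hs).symm
    have hca : ContinuousAt (fun s : ℝ => cQ B L * s * (Real.log s - Real.log L) / (s - L)) x := by
      have h0 : (0:ℝ) < x := hL0.trans hx'
      exact (((continuous_const.mul continuous_id).continuousAt.mul
        ((Real.continuousAt_log h0.ne').sub continuousAt_const)).div
        ((continuous_id.sub continuous_const).continuousAt) (sub_ne_zero.2 hx'.ne'))
    exact (hca.congr hev).continuousWithinAt

lemma phiJ_contOn (hL0 : 0 < L) : ContinuousOn (phiJ B L) (Set.Ici L) := by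
  intro x hx
  rcases eq_or_lt_of_le (Set.mem_Ici.1 hx) with rfl | hx'
  · rw [phiJ, continuousWithinAt_update_same]
    have hs := (slope_log_tendsto hL0).mono_left
      (nhdsWithin_mono L (fun y (hy : y ∈ Set.Ici L \ {L}) => hy.2))
    have h := hs.const_mul (-(cQ B L))
    have hval : -(cQ B L) * L⁻¹ = -(cQ B L)/L := by field_simp
    rw [hval] at h
    refine h.congr fun s => ?_
    ring
  · have hev : (fun s : ℝ => -(cQ B L) * (Real.log s - Real.log L) / (s - L)) =ᶠ[nhds x]
        phiJ B L := by
      filter_upwards [eventually_ne_nhds hx'.ne'] with s hs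
      exact (phiJ_eq B hs).symm
    have hca : ContinuousAt (fun s : ℝ => -(cQ B L) * (Real.log s - Real.log L) / (s - L)) x := by
      have h0 : (0:ℝ) < x := hL0.trans hx'
      exact ((continuousAt_const.mul
        ((Real.continuousAt_log h0.ne').sub continuousAt_const)).div
        ((continuous_id.sub continuous_const).continuousAt) (sub_ne_zero.2 hx'.ne'))
    exact (hca.congr hev).continuousWithinAt

lemma qd_measurable : Measurable (qd B L) := by
  unfold qd
  exact (measurable_const.mul
    ((measurable_id.sub_const L).sub ((Real.measurable_log.sub_const _).const_mul L))).div
    ((measurable_id.sub_const L).pow_const 2)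

lemma psi_measurable : Measurable (psi B L) := by
  have h : Measurable (fun s : ℝ => cQ B L * s * (Real.log s - Real.log L) / (s - L)) :=
    ((measurable_const.mul measurable_id).mul
      (Real.measurable_log.sub_const _)).div (measurable_id.sub_const L)
  have heq : psi B L = fun t => if t = L then cQ B L else
      cQ B L * t * (Real.log t - Real.log L) / (t - L) := by
    funext t
    simp [psi, Function.update_apply]
  rw [heq]
  exact Measurable.ite (measurableSet_eq) measurable_const h

lemma key_identity (hL0 : 0 < L) {t : ℝ} (ht : L < t) :
    L * psi B L t + t * (t - L) * qd B L t = cQ B L * t := by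
  rw [psi_eq B ht.ne']
  unfold qd
  have hne : t - L ≠ 0 := sub_ne_zero.2 ht.ne'
  field_simp
  ring

lemma kap_nonneg (hL0 : 0 < L) (hLB : L < B) {t : ℝ} (ht : L < t) :
    0 ≤ psi B L t - t * qd B L t := by
  have h0 : (0:ℝ) < t := hL0.trans ht
  have hne : t - L ≠ 0 := sub_ne_zero.2 ht.ne'
  have h2 := le_log_diff hL0 ht
  have hrw : psi B L t - t * qd B L t
      = cQ B L * t * (t * (Real.log t - Real.log L) - (t - L)) / (t - L)^2 := by
    rw [psi_eq B ht.ne']; unfold qd; field_simp; ring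
  rw [hrw]
  have h3 : t - L ≤ t * (Real.log t - Real.log L) := by
    have := mul_le_mul_of_nonneg_left h2 h0.le
    rw [mul_div_cancel₀ _ h0.ne'] at this
    linarith
  apply div_nonneg (mul_nonneg (mul_nonneg (cQ_pos hL0 hLB).le h0.le) (by linarith))
    (by positivity)

lemma psi_le (hL0 : 0 < L) (hLB : L < B) {t : ℝ} (ht : L < t) :
    psi B L t ≤ cQ B L * t / L := by
  have h0 : (0:ℝ) < t := hL0.trans ht
  have hne : (0:ℝ) < t - L := sub_pos.2 ht
  rw [psi_eq B ht.ne']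
  have h2 := log_diff_le hL0 ht
  have hc := (cQ_pos hL0 hLB).le
  rw [div_le_iff₀ hne]
  have hrw : cQ B L * t / L * (t - L) = cQ B L * t * ((t-L)/L) := by ring
  rw [hrw]
  exact mul_le_mul_of_nonneg_left h2 (mul_nonneg hc h0.le)

lemma psi_nonneg (hL0 : 0 < L) (hLB : L < B) {t : ℝ} (ht : L < t) : 0 ≤ psi B L t := by
  have h0 : (0:ℝ) < t := hL0.trans ht
  rw [psi_eq B ht.ne']
  have h2 := le_log_diff hL0 ht
  have h3 : (0:ℝ) ≤ (t - L)/t := div_nonneg (by linarith) h0.le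
  apply div_nonneg (mul_nonneg (mul_nonneg (cQ_pos hL0 hLB).le h0.le) (by linarith))
    (by linarith)

lemma kap_le (hL0 : 0 < L) (hLB : L < B) {t : ℝ} (ht : L < t) :
    psi B L t - t * qd B L t ≤ cQ B L * t / L := by
  have h0 : (0:ℝ) < t := hL0.trans ht
  have h1 : 0 ≤ t * qd B L t := mul_nonneg h0.le (qd_nonneg hL0 hLB ht)
  linarith [psi_le hL0 hLB ht]

lemma qd_intervalIntegrable (hL0 : 0 < L) (hLB : L < B) {r : ℝ} (hr : L < r) :
    IntervalIntegrable (qd B L) volume L r := by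
  rw [intervalIntegrable_iff_integrableOn_Ioc_of_le hr.le]
  have hfin : volume (Set.Ioc L r) < ⊤ := by simp [Real.volume_Ioc]
  refine (integrableOn_const (C := cQ B L / L) hfin.ne).mono'
    (qd_measurable.aestronglyMeasurable) ?_
  filter_upwards [ae_restrict_mem measurableSet_Ioc] with t ht
  rw [Real.norm_eq_abs, abs_of_nonneg (qd_nonneg hL0 hLB ht.1)]
  exact qd_le hL0 hLB ht.1

lemma qd_integral (hL0 : 0 < L) (hLB : L < B) {r : ℝ} (hr : L < r) :
    ∫ t in Set.Ioc L r, qd B L t = psi B L r - cQ B L := by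
  have h := intervalIntegral.integral_eq_sub_of_hasDeriv_right_of_le hr.le
    ((psi_contOn hL0).mono (Set.Icc_subset_Ici_self))
    (fun x hx => (psi_hasDerivAt hL0 hx.1).hasDerivWithinAt)
    (qd_intervalIntegrable hL0 hLB hr)
  rw [intervalIntegral.integral_of_le hr.le] at h
  rw [h, psi_at_L]

lemma kapdiv_integrableOn (hL0 : 0 < L) (hLB : L < B) :
    IntegrableOn (fun t => (psi B L t - t * qd B L t)/t^2) (Set.Ioc L B) := by
  have hmeas : Measurable (fun t => (psi B L t - t * qd B L t)/t^2) :=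
    ((psi_measurable.sub (measurable_id.mul qd_measurable)).div
      (measurable_id.pow_const 2))
  have hfin : volume (Set.Ioc L B) < ⊤ := by simp [Real.volume_Ioc]
  refine (integrableOn_const (C := cQ B L / L^2) hfin.ne).mono'
    hmeas.aestronglyMeasurable ?_
  filter_upwards [ae_restrict_mem measurableSet_Ioc] with t ht
  have h0 : (0:ℝ) < t := hL0.trans ht.1
  have h1 := kap_nonneg hL0 hLB ht.1
  have h2 := kap_le hL0 hLB ht.1
  rw [Real.norm_eq_abs, abs_of_nonneg (by positivity)]
  rw [div_le_div_iff₀ (by positivity) (by positivity)]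
  have hc := (cQ_pos hL0 hLB).le
  calc (psi B L t - t * qd B L t) * L^2 ≤ (cQ B L * t / L) * L^2 := by nlinarith
    _ = cQ B L * t * L := by field_simp
    _ ≤ cQ B L * t^2 := by
        nlinarith [mul_nonneg (mul_nonneg hc h0.le) (sub_nonneg.2 ht.1.le)]

lemma J_integral (hL0 : 0 < L) (hLB : L < B) :
    ∫ t in Set.Ioc L B, (psi B L t - t * qd B L t)/t^2
      = cQ B L / L - cQ B L * (Real.log B - Real.log L)/(B - L) := by
  have h := intervalIntegral.integral_eq_sub_of_hasDeriv_right_of_le hLB.le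
    ((phiJ_contOn hL0).mono (Set.Icc_subset_Ici_self))
    (fun x hx => (phiJ_hasDerivAt hL0 hx.1).hasDerivWithinAt)
    ((intervalIntegrable_iff_integrableOn_Ioc_of_le hLB.le).2 (kapdiv_integrableOn hL0 hLB))
  rw [intervalIntegral.integral_of_le hLB.le] at h
  rw [h, phiJ_at_L, phiJ_eq B hLB.ne']
  ring

lemma pointwise_key (hL0 : 0 < L) (hLB : L < B) {t u : ℝ} (ht : L < t)
    (hu0 : 0 ≤ u) (hu1 : u ≤ 1) :
    2 * cQ B L * (1 - u) - (psi B L t - t * qd B L t) * L^2 / t^2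
      ≤ psi B L t * (1 - u)^2 + t * qd B L t * (1 - u^2) := by
  have h0 : (0:ℝ) < t := hL0.trans ht
  have hid := key_identity (B := B) hL0 ht
  have hk := kap_nonneg hL0 hLB ht
  have hc : cQ B L = (L * psi B L t + t*(t-L)*qd B L t)/t := by
    rw [eq_div_iff h0.ne']; linarith [hid]
  have key : psi B L t * (1-u)^2 + t * qd B L t * (1 - u^2)
      - (2 * cQ B L * (1-u) - (psi B L t - t * qd B L t) * L^2 / t^2)
      = (psi B L t - t * qd B L t) * ((1-u) - L/t)^2 := by
    rw [hc]
    field_simp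
    ring
  nlinarith [mul_nonneg hk (sq_nonneg ((1-u) - L/t))]

lemma psi_ge (hL0 : 0 < L) (hLB : L < B) {t : ℝ} (ht : L < t) :
    cQ B L ≤ psi B L t := by
  have h0 : (0:ℝ) < t := hL0.trans ht
  have h2 := le_log_diff hL0 ht
  rw [psi_eq B ht.ne', le_div_iff₀ (sub_pos.2 ht)]
  have h3 : t - L ≤ t * (Real.log t - Real.log L) := by
    have := mul_le_mul_of_nonneg_left h2 h0.le
    rw [mul_div_cancel₀ _ h0.ne'] at this
    linarith
  nlinarith [(cQ_pos hL0 hLB).le]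

lemma integrableOn_of_bdd {f : ℝ → ℝ} {s : Set ℝ} (hs : MeasurableSet s)
    (hvol : volume s < ⊤) (hf : AEStronglyMeasurable f (volume.restrict s)) {C : ℝ}
    (hC : ∀ x ∈ s, |f x| ≤ C) : IntegrableOn f s := by
  refine (integrableOn_const (C := C) hvol.ne).mono' hf ?_
  filter_upwards [ae_restrict_mem hs] with x hx
  exact hC x hx

end aux2



set_option maxHeartbeats 1000000 in
theorem Fstar_minimizes_revenue_against_Qstar (B μ L : ℝ)
    (hB : 0 < B) (hμ0 : 0 < μ) (hμB : μ < B)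
    (hL : L ∈ Set.Ioo (0 : ℝ) B) (hLμ : L * (1 + Real.log (B / L)) = μ)
    (Qs : ℝ → ℝ)
    (hQs : ∀ r, Qs r =
      if r < 0 then 0
      else if r ≤ L then (1 - L / B) / Real.log (B / L)
      else if r ≤ B then (1 - L / B) * (r / (r - L)) * (Real.log (r / L) / Real.log (B / L))
      else 1)
    (Qm : Measure ℝ) [IsProbabilityMeasure Qm]
    (hQm : ∀ r, (Qm (Set.Iic r)).toReal = Qs r)
    (F : ℝ → ℝ) (hFmono : Monotone F)
    (hFrc : ∀ x, ContinuousWithinAt F (Set.Ici x) x)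
    (hF01 : ∀ v, F v ∈ Set.Icc (0 : ℝ) 1)
    (hF0 : ∀ v, v < 0 → F v = 0) (hFB : ∀ v, B ≤ v → F v = 1)
    (hFmean : (∫ v in (0 : ℝ)..B, (1 - F v)) = μ) :
    (∫ r, (r * (1 - (F r) ^ 2) + ∫ t in r..B, (1 - F t) ^ 2) ∂Qm)
      ≥ 2 * L - L ^ 2 / B := by
  obtain ⟨hL0, hLB⟩ := hL
  have hk : Real.log (B/L) = Real.log B - Real.log L := Real.log_div hB.ne' hL0.ne'
  have hkpos : 0 < Real.log B - Real.log L := logBL_pos hL0 hLB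
  have hcpos : 0 < cQ B L := cQ_pos hL0 hLB
  have hFmeas : Measurable F := hFmono.measurable
  set G : ℝ → ℝ := fun t => 1 - F t with hGdef
  have hGmeas : Measurable G := measurable_const.sub hFmeas
  have hG0 : ∀ t, 0 ≤ G t := fun t => by simp only [hGdef]; linarith [(hF01 t).2]
  have hG1 : ∀ t, G t ≤ 1 := fun t => by simp only [hGdef]; linarith [(hF01 t).1]
  have hGsq01 : ∀ t, (G t)^2 ∈ Set.Icc (0:ℝ) 1 := fun t =>
    ⟨sq_nonneg _, by nlinarith [hG0 t, hG1 t]⟩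
  -- integrability of G^2 on bounded sets
  have hG2int : ∀ a b : ℝ, IntegrableOn (fun s => (G s)^2) (Set.Ioc a b) := by
    intro a b
    exact integrableOn_of_bdd measurableSet_Ioc (by simp [Real.volume_Ioc])
      ((hGmeas.pow_const 2).aestronglyMeasurable) (C := 1)
      (fun x _ => by rw [abs_of_nonneg (sq_nonneg _)]; exact (hGsq01 x).2)
  have hGint : ∀ a b : ℝ, IntegrableOn G (Set.Ioc a b) := by
    intro a b
    exact integrableOn_of_bdd measurableSet_Ioc (by simp [Real.volume_Ioc])
      (hGmeas.aestronglyMeasurable) (C := 1)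
      (fun x _ => by rw [abs_of_nonneg (hG0 x)]; exact hG1 x)
  set H : ℝ → ℝ := fun r => ∫ s in Set.Ioc r B, (G s)^2 with hHdef
  have hHnonneg : ∀ r, 0 ≤ H r := fun r =>
    setIntegral_nonneg measurableSet_Ioc (fun x _ => sq_nonneg _)
  have hHanti : Antitone H := by
    intro r1 r2 h12
    exact setIntegral_mono_set (hG2int r1 B)
      (Filter.Eventually.of_forall (fun x => sq_nonneg _))
      ((Set.Ioc_subset_Ioc_left h12).eventuallyLE)
  have hHmeas : Measurable H := hHanti.measurable
  have hHle : ∀ r, 0 ≤ r → H r ≤ B := by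
    intro r hr
    calc H r ≤ ∫ s in Set.Ioc r B, 1 :=
          setIntegral_mono_on (hG2int r B)
            (integrableOn_const (C := (1:ℝ)) (by simp [Real.volume_Ioc]))
            measurableSet_Ioc (fun x _ => (hGsq01 x).2)
      _ ≤ B := by
          rw [setIntegral_const, smul_eq_mul, mul_one, Measure.real, Real.volume_Ioc]
          rcases le_or_gt r B with h | h
          · rw [ENNReal.toReal_ofReal (by linarith)]; linarith
          · rw [ENNReal.ofReal_eq_zero.2 (by linarith)]; simpa using hB.le
  set Rev : ℝ → ℝ := fun r => r * (1 - (F r)^2) + H r with hRevdef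
  have hRevmeas : Measurable Rev :=
    ((measurable_id.mul (measurable_const.sub (hFmeas.pow_const 2)))).add hHmeas
  have hRevEq : (fun r => r * (1 - (F r) ^ 2) + ∫ t in r..B, (1 - F t) ^ 2) = Rev := by
    funext r
    simp only [hRevdef]
    congr 1
    show (∫ t in r..B, (1 - F t)^2) = ∫ s in Set.Ioc r B, (G s)^2
    rcases le_or_gt r B with h | h
    · rw [intervalIntegral.integral_of_le h]
    · rw [intervalIntegral.integral_of_ge h.le]
      have hz1 : ∀ s ∈ Set.Ioc B r, (1 - F s)^2 = 0 := fun s hs => by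
        rw [hFB s hs.1.le]; ring
      have hz2 : Set.Ioc r B = ∅ := Set.Ioc_eq_empty (by exact fun h' => absurd h' (not_lt.2 h.le))
      rw [setIntegral_congr_fun measurableSet_Ioc hz1, hz2]
      simp
  have hRevBnd : ∀ r ∈ Set.Ioc L B, |Rev r| ≤ 2*B := by
    intro r hr
    have h1 : 0 ≤ 1 - (F r)^2 := by nlinarith [(hF01 r).1, (hF01 r).2]
    have h2 : 1 - (F r)^2 ≤ 1 := by nlinarith [(hF01 r).1]
    have h3 : 0 < r := hL0.trans hr.1
    have h4 : 0 ≤ Rev r := by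
      simp only [hRevdef]
      have := hHnonneg r
      nlinarith
    rw [abs_of_nonneg h4]
    simp only [hRevdef]
    have h5 : r * (1 - F r^2) ≤ B := by nlinarith [hr.2]
    linarith [hHle r h3.le, h5]
  -- Q* as formula = psi
  have hQspsi : ∀ r, L < r → r ≤ B →
      (1 - L / B) * (r / (r - L)) * (Real.log (r / L) / Real.log (B / L)) = psi B L r := by
    intro r h1 h2
    have h0 : (0:ℝ) < r := hL0.trans h1
    rw [psi_eq B h1.ne', hk, Real.log_div h0.ne' hL0.ne', cQ]
    have hrL : r - L ≠ 0 := sub_ne_zero.2 h1.ne'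
    field_simp
  have hQsc : (1 - L / B) / Real.log (B / L) = cQ B L := by
    rw [hk, cQ, div_eq_div_iff hkpos.ne' (by positivity)]
    field_simp
  -- the explicit measure
  set dq : ℝ → NNReal := fun t => Real.toNNReal (qd B L t) with hdqdef
  have hdqmeas : Measurable dq := qd_measurable.real_toNNReal
  set ν2 : Measure ℝ := (volume.restrict (Set.Ioc L B)).withDensity
    (fun t => (dq t : ENNReal)) with hν2def
  set ν : Measure ℝ := (ENNReal.ofReal (cQ B L)) • Measure.dirac 0 + ν2 with hνdef
  have hν2ap : ∀ r : ℝ, ν2 (Set.Iic r)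
      = ∫⁻ t in Set.Iic r ∩ Set.Ioc L B, ENNReal.ofReal (qd B L t) := by
    intro r
    rw [hν2def, withDensity_apply _ measurableSet_Iic,
      Measure.restrict_restrict measurableSet_Iic]
    rfl
  have hseteq : ∀ r : ℝ, L < r → Set.Iic r ∩ Set.Ioc L B = Set.Ioc L (min r B) := by
    intro r h1
    ext x
    simp only [Set.mem_inter_iff, Set.mem_Iic, Set.mem_Ioc, le_min_iff]
    constructor
    · rintro ⟨hx, hx2, hx3⟩; exact ⟨hx2, hx, hx3⟩
    · rintro ⟨hx2, hx, hx3⟩; exact ⟨hx, hx2, hx3⟩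
  have hν2val : ∀ r : ℝ, L < r →
      ν2 (Set.Iic r) = ENNReal.ofReal (psi B L (min r B) - cQ B L) := by
    intro r h1
    have h1' : L < min r B := lt_min h1 hLB
    rw [hν2ap r, hseteq r h1, ← ofReal_integral_eq_lintegral_ofReal, qd_integral hL0 hLB h1']
    · exact (intervalIntegrable_iff_integrableOn_Ioc_of_le h1'.le).1
        (qd_intervalIntegrable hL0 hLB h1')
    · filter_upwards [ae_restrict_mem measurableSet_Ioc] with t ht
      exact qd_nonneg hL0 hLB ht.1
  have hpsic : ∀ r : ℝ, L < r → 0 ≤ psi B L r - cQ B L :=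
    fun r h1 => sub_nonneg.2 (psi_ge hL0 hLB h1)
  have hpsiB1 : psi B L B = 1 := by
    have h1 : B - L ≠ 0 := sub_ne_zero.2 hLB.ne'
    have h2 : Real.log B - Real.log L ≠ 0 := hkpos.ne'
    rw [psi_eq B hLB.ne', cQ]
    field_simp
  have hQmeq : Qm = ν := by
    apply Measure.ext_of_Iic
    intro r
    have hQr : Qm (Set.Iic r) = ENNReal.ofReal (Qs r) := by
      rw [← hQm r, ENNReal.ofReal_toReal (measure_ne_top _ _)]
    rw [hQr, hνdef, Measure.add_apply, Measure.smul_apply, smul_eq_mul]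
    rcases lt_or_ge r 0 with hr0 | hr0
    · have hd : Measure.dirac (0:ℝ) (Set.Iic r) = 0 := by
        rw [Measure.dirac_apply' _ measurableSet_Iic]
        simp [Set.indicator_apply, hr0.not_ge]
      have hz : Set.Iic r ∩ Set.Ioc L B = ∅ := by
        ext x
        simp only [Set.mem_inter_iff, Set.mem_Iic, Set.mem_Ioc, Set.mem_empty_iff_false,
          iff_false, not_and]
        intro hx hx2
        linarith
      rw [hd, hν2ap r, hz, hQs r, if_pos hr0]
      simp
    · have hd : Measure.dirac (0:ℝ) (Set.Iic r) = 1 := by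
        rw [Measure.dirac_apply' _ measurableSet_Iic]
        simp [Set.indicator_apply, hr0]
      rcases le_or_gt r L with hrL | hrL
      · have hz : Set.Iic r ∩ Set.Ioc L B = ∅ := by
          ext x
          simp only [Set.mem_inter_iff, Set.mem_Iic, Set.mem_Ioc, Set.mem_empty_iff_false,
            iff_false, not_and]
          intro hx hx2
          linarith
        rw [hd, hν2ap r, hz, hQs r, if_neg (not_lt.2 hr0), if_pos hrL, hQsc]
        simp
      · rw [hd, hν2val r hrL, mul_one]
        rcases le_or_gt r B with hrB | hrB
        · rw [min_eq_left hrB, ← ENNReal.ofReal_add hcpos.le (hpsic r hrL),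
            hQs r, if_neg (not_lt.2 hr0), if_neg (not_le.2 hrL), if_pos hrB, hQspsi r hrL hrB]
          ring_nf
        · rw [min_eq_right hrB.le, ← ENNReal.ofReal_add hcpos.le (hpsic B hLB),
            hQs r, if_neg (not_lt.2 hr0), if_neg (not_le.2 hrL), if_neg (not_le.2 hrB), hpsiB1]
          norm_num
  -- integrability of Rev against the pieces
  have hvolLB : volume (Set.Ioc L B) < ⊤ := by simp [Real.volume_Ioc]
  have hintd : Integrable Rev (Measure.dirac (0:ℝ)) := by
    refine (integrable_const (Rev 0)).congr ?_
    rw [ae_dirac_eq]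
    exact Filter.eventually_pure.2 rfl
  have hint1 : Integrable Rev ((ENNReal.ofReal (cQ B L)) • Measure.dirac 0) :=
    hintd.smul_measure ENNReal.ofReal_ne_top
  have hdqeq : ∀ t ∈ Set.Ioc L B, ((dq t : ℝ)) = qd B L t := by
    intro t ht
    simp only [hdqdef]
    exact Real.coe_toNNReal _ (qd_nonneg hL0 hLB ht.1)
  have hdqbnd : ∀ t ∈ Set.Ioc L B, |(dq t : ℝ)| ≤ cQ B L / L := by
    intro t ht
    rw [hdqeq t ht, abs_of_nonneg (qd_nonneg hL0 hLB ht.1)]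
    exact qd_le hL0 hLB ht.1
  have hfunrw : (fun t => dq t • Rev t) = fun t => (dq t : ℝ) * Rev t :=
    funext (fun t => by rw [NNReal.smul_def, smul_eq_mul])
  have hsmulint : Integrable (fun t => dq t • Rev t)
      (volume.restrict (Set.Ioc L B)) := by
    rw [hfunrw]
    refine integrableOn_of_bdd measurableSet_Ioc hvolLB
      ((hdqmeas.coe_nnreal_real.mul hRevmeas).aestronglyMeasurable)
      (C := (cQ B L / L) * (2*B)) ?_
    intro x hx
    rw [abs_mul]
    exact mul_le_mul (hdqbnd x hx) (hRevBnd x hx) (abs_nonneg _)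
      (by positivity)
  have hint2 : Integrable Rev ν2 := by
    rw [hν2def]
    exact (integrable_withDensity_iff_integrable_smul hdqmeas).2 hsmulint
  have hdecomp0 : (∫ r, (r * (1 - (F r) ^ 2) + ∫ t in r..B, (1 - F t) ^ 2) ∂Qm)
      = cQ B L * Rev 0 + ∫ t in Set.Ioc L B, qd B L t * Rev t := by
    rw [hRevEq, hQmeq, hνdef, integral_add_measure hint1 hint2, integral_smul_measure,
      integral_dirac, ENNReal.toReal_ofReal hcpos.le, hν2def,
      integral_withDensity_eq_integral_smul hdqmeas Rev]
    congr 1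
    rw [hfunrw]
    refine setIntegral_congr_fun measurableSet_Ioc (fun t ht => ?_)
    rw [hdqeq t ht]
  -- Fubini
  have hFub : ∫ t in Set.Ioc L B, qd B L t * H t
      = ∫ s in Set.Ioc L B, (psi B L s - cQ B L) * (G s)^2 := by
    set W : ℝ × ℝ → ℝ := fun p => qd B L p.1 *
      ({q : ℝ × ℝ | q.1 < q.2}.indicator (fun q => (G q.2)^2) p) with hWdef
    have hWmeas : Measurable W :=
      (qd_measurable.comp measurable_fst).mul
        (((hGmeas.comp measurable_snd).pow_const 2).indicator
          (measurableSet_lt measurable_fst measurable_snd))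
    haveI hfin1 : IsFiniteMeasure (volume.restrict (Set.Ioc L B)) :=
      ⟨by rw [Measure.restrict_apply_univ]; exact hvolLB⟩
    have hWint : Integrable W
        ((volume.restrict (Set.Ioc L B)).prod (volume.restrict (Set.Ioc L B))) := by
      refine (integrable_const (cQ B L / L)).mono' hWmeas.aestronglyMeasurable ?_
      rw [Measure.prod_restrict]
      filter_upwards [ae_restrict_mem (measurableSet_Ioc.prod measurableSet_Ioc)] with p hp
      obtain ⟨hp1, _⟩ := hp
      have h1 : |qd B L p.1| ≤ cQ B L / L := by
        rw [abs_of_nonneg (qd_nonneg hL0 hLB hp1.1)]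
        exact qd_le hL0 hLB hp1.1
      have h2 : |({q : ℝ × ℝ | q.1 < q.2}.indicator (fun q => (G q.2)^2) p)| ≤ 1 := by
        rw [Set.indicator_apply]
        split
        · rw [abs_of_nonneg (sq_nonneg _)]; exact (hGsq01 _).2
        · simp
      have := mul_le_mul h1 h2 (abs_nonneg _) (by positivity)
      rw [Real.norm_eq_abs, hWdef, abs_mul]
      simpa using this
    have hswap := integral_integral_swap (f := fun t s => W (t, s))
      (μ := volume.restrict (Set.Ioc L B)) (ν := volume.restrict (Set.Ioc L B)) hWint
    have hleft : ∫ t in Set.Ioc L B, (∫ s in Set.Ioc L B, W (t, s))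
        = ∫ t in Set.Ioc L B, qd B L t * H t := by
      refine setIntegral_congr_fun measurableSet_Ioc (fun t ht => ?_)
      have hWts : ∀ s, W (t, s) = qd B L t * (Set.Ioi t).indicator (fun s => (G s)^2) s := by
        intro s
        rw [hWdef]
        simp only [Set.indicator_apply, Set.mem_setOf_eq, Set.mem_Ioi]
      simp only [hWts]
      rw [integral_const_mul, setIntegral_indicator measurableSet_Ioi]
      have hseq : Set.Ioc L B ∩ Set.Ioi t = Set.Ioc t B := by
        ext x
        simp only [Set.mem_inter_iff, Set.mem_Ioc, Set.mem_Ioi]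
        constructor
        · rintro ⟨⟨_, hx2⟩, hx3⟩; exact ⟨hx3, hx2⟩
        · rintro ⟨hx3, hx2⟩; exact ⟨⟨ht.1.trans hx3, hx2⟩, hx3⟩
      rw [hseq]
    have hright : ∫ s in Set.Ioc L B, (∫ t in Set.Ioc L B, W (t, s))
        = ∫ s in Set.Ioc L B, (psi B L s - cQ B L) * (G s)^2 := by
      refine setIntegral_congr_fun measurableSet_Ioc (fun s hs => ?_)
      have hWts : ∀ t, W (t, s) = (Set.Iio s).indicator (fun t => qd B L t * (G s)^2) t := by
        intro t
        rw [hWdef]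
        simp only [Set.indicator_apply, Set.mem_setOf_eq, Set.mem_Iio]
        split <;> simp
      simp only [hWts]
      rw [setIntegral_indicator measurableSet_Iio]
      have hseq : Set.Ioc L B ∩ Set.Iio s = Set.Ioo L s := by
        ext x
        simp only [Set.mem_inter_iff, Set.mem_Ioc, Set.mem_Ioo, Set.mem_Iio]
        constructor
        · rintro ⟨⟨hx1, _⟩, hx3⟩; exact ⟨hx1, hx3⟩
        · rintro ⟨hx1, hx3⟩; exact ⟨⟨hx1, (hx3.le.trans hs.2)⟩, hx3⟩
      rw [hseq, integral_mul_const, ← integral_Ioc_eq_integral_Ioo,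
        qd_integral hL0 hLB hs.1]
    rw [← hleft, hswap, hright]
  -- split Rev inside the set integral
  have hqdbd : ∀ t ∈ Set.Ioc L B, |qd B L t| ≤ cQ B L / L := by
    intro t ht
    rw [abs_of_nonneg (qd_nonneg hL0 hLB ht.1)]
    exact qd_le hL0 hLB ht.1
  have hintA : IntegrableOn (fun t => qd B L t * (t * (1 - (F t)^2))) (Set.Ioc L B) := by
    refine integrableOn_of_bdd measurableSet_Ioc hvolLB
      ((qd_measurable.mul (measurable_id.mul
        (measurable_const.sub (hFmeas.pow_const 2)))).aestronglyMeasurable)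
      (C := (cQ B L / L) * B) ?_
    intro x hx
    rw [abs_mul]
    refine mul_le_mul (hqdbd x hx) ?_ (abs_nonneg _) (by positivity)
    rw [abs_mul, abs_of_nonneg (hL0.trans hx.1).le]
    have h1 : |1 - (F x)^2| ≤ 1 := by
      rw [abs_le]
      constructor <;> nlinarith [(hF01 x).1, (hF01 x).2]
    nlinarith [hx.2, (hL0.trans hx.1).le, abs_nonneg (1 - (F x)^2)]
  have hintB : IntegrableOn (fun t => qd B L t * H t) (Set.Ioc L B) := by
    refine integrableOn_of_bdd measurableSet_Ioc hvolLB
      ((qd_measurable.mul hHmeas).aestronglyMeasurable)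
      (C := (cQ B L / L) * B) ?_
    intro x hx
    rw [abs_mul]
    refine mul_le_mul (hqdbd x hx) ?_ (abs_nonneg _) (by positivity)
    rw [abs_of_nonneg (hHnonneg x)]
    exact hHle x (hL0.trans hx.1).le
  have hsplit : ∫ t in Set.Ioc L B, qd B L t * Rev t
      = (∫ t in Set.Ioc L B, qd B L t * (t * (1 - (F t)^2)))
        + ∫ t in Set.Ioc L B, qd B L t * H t := by
    rw [← integral_add hintA hintB]
    refine setIntegral_congr_fun measurableSet_Ioc (fun t ht => ?_)
    simp only [hRevdef]
    ring
  -- split H 0 over (0, L] and (L, B]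
  have hH0split : H 0 = (∫ s in Set.Ioc (0:ℝ) L, (G s)^2) + ∫ s in Set.Ioc L B, (G s)^2 := by
    have hu : Set.Ioc (0:ℝ) L ∪ Set.Ioc L B = Set.Ioc (0:ℝ) B :=
      Set.Ioc_union_Ioc_eq_Ioc hL0.le hLB.le
    simp only [hHdef]
    rw [← hu, setIntegral_union (Set.Ioc_disjoint_Ioc_of_le le_rfl) measurableSet_Ioc
      (hG2int 0 L) (hG2int L B)]
  have hRev0 : Rev 0 = H 0 := by
    simp only [hRevdef]
    ring
  -- integrability of the combined pieces on (L,B]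
  have hintC : IntegrableOn (fun s => (psi B L s - cQ B L) * (G s)^2) (Set.Ioc L B) := by
    refine integrableOn_of_bdd measurableSet_Ioc hvolLB
      (((psi_measurable.sub measurable_const).mul (hGmeas.pow_const 2)).aestronglyMeasurable)
      (C := cQ B L * B / L) ?_
    intro x hx
    have h0 : (0:ℝ) < x := hL0.trans hx.1
    have hpos := psi_ge hL0 hLB hx.1
    have hle := psi_le hL0 hLB hx.1
    rw [abs_mul, abs_of_nonneg (sub_nonneg.2 hpos), abs_of_nonneg (sq_nonneg _)]
    have h1 : psi B L x - cQ B L ≤ cQ B L * B / L := by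
      have h2 : cQ B L * x / L ≤ cQ B L * B / L :=
        (div_le_div_iff_of_pos_right hL0).2 (mul_le_mul_of_nonneg_left hx.2 hcpos.le)
      linarith
    calc (psi B L x - cQ B L) * (G x)^2 ≤ (psi B L x - cQ B L) * 1 :=
          mul_le_mul_of_nonneg_left (hGsq01 x).2 (sub_nonneg.2 hpos)
      _ ≤ cQ B L * B / L := by linarith
  have hadd23 : IntegrableOn (fun t => qd B L t * (t * (1 - (F t)^2))
      + (psi B L t - cQ B L) * (G t)^2) (Set.Ioc L B) := hintA.add hintC
  have hadd123 : IntegrableOn (fun t => cQ B L * (G t)^2 + (qd B L t * (t * (1 - (F t)^2))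
      + (psi B L t - cQ B L) * (G t)^2)) (Set.Ioc L B) :=
    ((hG2int L B).const_mul (cQ B L)).add hadd23
  have hintComb : IntegrableOn
      (fun t => psi B L t * (G t)^2 + t * qd B L t * (1 - (F t)^2)) (Set.Ioc L B) := by
    refine hadd123.congr ?_
    filter_upwards [ae_restrict_mem measurableSet_Ioc] with t _
    ring
  have hcomb : cQ B L * ((∫ s in Set.Ioc (0:ℝ) L, (G s)^2) + ∫ s in Set.Ioc L B, (G s)^2)
      + ((∫ t in Set.Ioc L B, qd B L t * (t * (1 - (F t)^2)))
         + ∫ s in Set.Ioc L B, (psi B L s - cQ B L) * (G s)^2)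
      = cQ B L * (∫ s in Set.Ioc (0:ℝ) L, (G s)^2)
        + ∫ t in Set.Ioc L B, (psi B L t * (G t)^2 + t * qd B L t * (1 - (F t)^2)) := by
    have e1 : ∫ t in Set.Ioc L B, (psi B L t * (G t)^2 + t * qd B L t * (1 - (F t)^2))
        = ∫ t in Set.Ioc L B, (cQ B L * (G t)^2
            + (qd B L t * (t * (1 - (F t)^2)) + (psi B L t - cQ B L) * (G t)^2)) :=
      setIntegral_congr_fun measurableSet_Ioc (fun t _ => by ring)
    rw [e1, integral_add ((hG2int L B).const_mul _) hadd23,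
      integral_add hintA hintC, integral_const_mul]
    ring
  -- pointwise bounds
  have hconst1int : IntegrableOn (fun _ : ℝ => (1:ℝ)) (Set.Ioc (0:ℝ) L) :=
    integrableOn_const (C := (1:ℝ)) (by simp [Real.volume_Ioc])
  have hlow1int : IntegrableOn (fun s => 2 * G s - 1) (Set.Ioc (0:ℝ) L) :=
    ((hGint 0 L).const_mul 2).sub hconst1int
  have hpoint1 : ∀ s ∈ Set.Ioc (0:ℝ) L, 2 * G s - 1 ≤ (G s)^2 :=
    fun s _ => by nlinarith [hG1 s, hG0 s]
  have hmono1 := setIntegral_mono_on hlow1int (hG2int 0 L) measurableSet_Ioc hpoint1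
  have hκint2 : IntegrableOn (fun t => (psi B L t - t * qd B L t) * L^2 / t^2)
      (Set.Ioc L B) := by
    have h := (kapdiv_integrableOn hL0 hLB).mul_const (L^2)
    refine h.congr ?_
    filter_upwards [ae_restrict_mem measurableSet_Ioc] with t _
    ring
  have hlow2int : IntegrableOn
      (fun t => 2 * cQ B L * G t - (psi B L t - t * qd B L t) * L^2 / t^2)
      (Set.Ioc L B) := ((hGint L B).const_mul _).sub hκint2
  have hpoint2 : ∀ t ∈ Set.Ioc L B,
      2 * cQ B L * G t - (psi B L t - t * qd B L t) * L^2 / t^2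
        ≤ psi B L t * (G t)^2 + t * qd B L t * (1 - (F t)^2) := by
    intro t ht
    have h := pointwise_key hL0 hLB ht.1 (hF01 t).1 (hF01 t).2
    simp only [hGdef]
    linarith [h]
  have hmono2 := setIntegral_mono_on hlow2int hintComb measurableSet_Ioc hpoint2
  -- values of the lower bounds
  have hval1 : ∫ s in Set.Ioc (0:ℝ) L, (2 * G s - 1)
      = 2 * (∫ s in Set.Ioc (0:ℝ) L, G s) - L := by
    rw [integral_sub ((hGint 0 L).const_mul 2) hconst1int, integral_const_mul,
      setIntegral_const, smul_eq_mul, mul_one, Measure.real, Real.volume_Ioc, sub_zero,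
      ENNReal.toReal_ofReal hL0.le]
  have hval2 : ∫ t in Set.Ioc L B,
        (2 * cQ B L * G t - (psi B L t - t * qd B L t) * L^2 / t^2)
      = 2 * cQ B L * (∫ t in Set.Ioc L B, G t)
        - (cQ B L / L - cQ B L * (Real.log B - Real.log L)/(B - L)) * L^2 := by
    rw [integral_sub ((hGint L B).const_mul _) hκint2, integral_const_mul]
    congr 1
    have e2 : ∫ t in Set.Ioc L B, (psi B L t - t * qd B L t) * L^2 / t^2
        = ∫ t in Set.Ioc L B, ((psi B L t - t * qd B L t) / t^2) * L^2 :=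
      setIntegral_congr_fun measurableSet_Ioc (fun t _ => by ring)
    rw [e2, integral_mul_const, J_integral hL0 hLB]
  -- mean constraint
  have hmean : (∫ s in Set.Ioc (0:ℝ) L, G s) + (∫ t in Set.Ioc L B, G t)
      = L + L * (Real.log B - Real.log L) := by
    have hu := setIntegral_union (Set.Ioc_disjoint_Ioc_of_le le_rfl) measurableSet_Ioc
      (hGint 0 L) (hGint L B) (μ := volume) (f := G)
    rw [Set.Ioc_union_Ioc_eq_Ioc hL0.le hLB.le] at hu
    have hBint : ∫ s in Set.Ioc (0:ℝ) B, G s = μ := by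
      rw [← intervalIntegral.integral_of_le hB.le]
      exact hFmean
    rw [← hu, hBint, ← hLμ, hk]
    ring
  have hx : (∫ s in Set.Ioc (0:ℝ) L, G s)
      = L + L * (Real.log B - Real.log L) - (∫ t in Set.Ioc L B, G t) := by linarith
  have halg : 2*L - L^2/B
      = cQ B L * (2 * (∫ s in Set.Ioc (0:ℝ) L, G s) - L)
        + (2 * cQ B L * (∫ t in Set.Ioc L B, G t)
           - (cQ B L / L - cQ B L * (Real.log B - Real.log L)/(B - L)) * L^2) := by
    rw [hx, cQ]
    have h1 : B - L ≠ 0 := sub_ne_zero.2 hLB.ne'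
    have h2 : Real.log B - Real.log L ≠ 0 := hkpos.ne'
    field_simp
    ring
  -- conclusion
  rw [ge_iff_le, hdecomp0, hRev0, hH0split, hsplit, hFub, hcomb, halg]
  refine add_le_add ?_ ?_
  · rw [← hval1]
    exact mul_le_mul_of_nonneg_left hmono1 hcpos.le
  · rw [← hval2]
    exact hmono2
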